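/- arXiv:2603.02674 — 3 statements merged into one kernel-verified Lean document; each statement's English description precedes it below -/
import Mathlib

section
/- Under the standing hypotheses, let i ∈ P satisfy M_i ≠ 0 and set S = ⋃_{0 ≠ x ∈ M_i} S_x^M = {ℓ ≤ i : there exists 0 ≠ x ∈ M_i and y ∈ M_ℓ with t^{i−ℓ}y = x}. Then S has a minimal element, i.e. there is μ ∈ S such that no s ∈ S satisfies s < μ. -/
open scoped DirectSum

variable (P : Type) [AddCommGroup P] [Lattice P]
  [CovariantClass P P (· + ·) (· ≤ ·)] [DecidableEq P]
variable (R : Type) [CommRing R]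

/-- The monoid algebra `R[U₀]` on the submonoid `U₀` of nonnegative elements of `P`. -/
abbrev PersAlg : Type := AddMonoidAlgebra R ↥(AddSubmonoid.nonneg P)

/-- The monomial `t^p ∈ R[U₀]` for `p ≥ 0` (and `0` otherwise, a junk value). -/
noncomputable def tp (p : P) : PersAlg P R :=
  letI := Classical.dec (0 ≤ p)
  if h : 0 ≤ p then AddMonoidAlgebra.single (⟨p, h⟩ : ↥(AddSubmonoid.nonneg P)) 1 else 0

/-- A `P`-graded `R[U₀]`-module (persistence module): an `R[U₀]`-module together with an
internal direct sum decomposition `M = ⊕_{a ∈ P} M_a` into `R`-submodules such that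
`t^s • M_a ⊆ M_{a+s}` for all `s ≥ 0`. -/
structure PersMod : Type 1 where
  carrier : Type
  [isAddCommGroup : AddCommGroup carrier]
  [isModuleR : Module R carrier]
  [isModule : Module (PersAlg P R) carrier]
  [isTower : IsScalarTower R (PersAlg P R) carrier]
  deg : P → Submodule R carrier
  isInternal : DirectSum.IsInternal deg
  tp_smul_mem : ∀ (s : P), 0 ≤ s → ∀ (a : P) (x : carrier),
    x ∈ deg a → tp P R s • x ∈ deg (a + s)

attribute [instance] PersMod.isAddCommGroup PersMod.isModuleR PersMod.isModule PersMod.isTower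

/-- Scalar multiplication by a fixed element of `R[U₀]`, as an `R`-linear map. -/
noncomputable def smulMapR (M : PersMod P R) (a : PersAlg P R) : M.carrier →ₗ[R] M.carrier :=
  (LinearMap.lsmul (PersAlg P R) M.carrier a).restrictScalars R

/-- `D_r ⊆ M_r`, the sum of the images of all `M_q`, `q < r`, under `t^{r-q}`. -/
noncomputable def Dsub (M : PersMod P R) (r : P) : Submodule R M.carrier :=
  ⨆ q : {q : P // q < r}, Submodule.map (smulMapR P R M (tp P R (r - q.1))) (M.deg q.1)

/-- `M` is graded free: it admits an `R[U₀]`-basis of homogeneous elements. -/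
def IsGradedFree (M : PersMod P R) : Prop :=
  ∃ (Λ : Type) (d : Λ → P) (b : Module.Basis Λ (PersAlg P R) M.carrier),
    ∀ η, b η ∈ M.deg (d η)

/-- `M` is graded projective: it is a graded direct summand of a graded free module. -/
def IsGradedProjective (M : PersMod P R) : Prop :=
  ∃ F : PersMod P R, IsGradedFree P R F ∧
    ∃ (ι : M.carrier →ₗ[PersAlg P R] F.carrier) (π : F.carrier →ₗ[PersAlg P R] M.carrier),
      (∀ (a : P), ∀ x ∈ M.deg a, ι x ∈ F.deg a) ∧
      (∀ (a : P), ∀ x ∈ F.deg a, π x ∈ M.deg a) ∧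
      π.comp ι = LinearMap.id

/-- An `R[U₀]`-submodule `S` of a graded module `F` is graded if it is the sum of its
homogeneous parts `S ∩ F_a`. -/
def IsGradedSubmodule (F : PersMod P R) (S : Submodule (PersAlg P R) F.carrier) : Prop :=
  S.restrictScalars R = ⨆ a : P, (S.restrictScalars R ⊓ F.deg a)

/-- For a graded submodule `S ⊆ F`, the submodule `D_r` of sums of images of the homogeneous
pieces `S ∩ F_q`, `q < r`, under `t^{r-q}`. -/
noncomputable def DsubOf (F : PersMod P R) (S : Submodule (PersAlg P R) F.carrier) (r : P) :
    Submodule R F.carrier :=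
  ⨆ q : {q : P // q < r},
    Submodule.map (smulMapR P R F (tp P R (r - q.1))) (S.restrictScalars R ⊓ F.deg q.1)

section aux

variable {P : Type} [AddCommGroup P] [Lattice P]
  [CovariantClass P P (· + ·) (· ≤ ·)] [DecidableEq P]
variable {R : Type} [CommRing R]

lemma tp_pos (p : P) (h : 0 ≤ p) :
    tp P R p = AddMonoidAlgebra.single (⟨p, h⟩ : ↥(AddSubmonoid.nonneg P)) (1 : R) := by
  simp only [tp]
  rw [dif_pos h]

lemma tp_coe (u : ↥(AddSubmonoid.nonneg P)) :
    tp P R (↑u : P) = AddMonoidAlgebra.single u (1 : R) := by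
  rw [tp_pos (↑u : P) u.2]

lemma tp_mul (p q : P) (hp : 0 ≤ p) (hq : 0 ≤ q) :
    tp P R p * tp P R q = tp P R (p + q) := by
  rw [tp_pos p hp, tp_pos q hq, tp_pos (p + q) (add_nonneg hp hq),
    AddMonoidAlgebra.single_mul_single, one_mul]
  rfl

variable (F : PersMod P R) {Λ : Type} (d : Λ → P) (b : Module.Basis Λ (PersAlg P R) F.carrier)

/-- Coordinates of a homogeneous element w.r.t. a homogeneous basis are homogeneous:
if `x ∈ F_i` then the coefficient of `b η` is supported in degree `i - d η`. -/
lemma repr_support_degree (hb : ∀ η, b η ∈ F.deg (d η)) {i : P} {x : F.carrier}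
    (hx : x ∈ F.deg i) (η : Λ) (u : ↥(AddSubmonoid.nonneg P))
    (hu : (b.repr x η).coeff u ≠ 0) : d η + ↑u = i := by
  classical
  by_contra hne
  set c : Λ →₀ PersAlg P R := b.repr x with hc
  set A : Finset Λ := c.support with hA
  set B : Finset ↥(AddSubmonoid.nonneg P) := A.biUnion fun η => (c η).coeff.support with hB
  set s : Finset (Λ × ↥(AddSubmonoid.nonneg P)) := A ×ˢ B with hs
  set f : Λ × ↥(AddSubmonoid.nonneg P) → P := fun p => d p.1 + ↑p.2 with hf
  set T : Finset P := s.image f with hT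
  set z : Λ × ↥(AddSubmonoid.nonneg P) → PersAlg P R :=
    fun p => (c p.1).coeff p.2 • tp P R (↑p.2 : P) with hz
  set term : Λ × ↥(AddSubmonoid.nonneg P) → F.carrier := fun p => z p • b p.1 with hterm
  set g : P → F.carrier := fun a => ∑ p ∈ s.filter (fun p => f p = a), term p with hg
  -- each `g a` is homogeneous of degree `a`
  have hga : ∀ a, g a ∈ F.deg a := by
    intro a
    refine Submodule.sum_mem _ fun p hp => ?_
    rw [Finset.mem_filter] at hp
    have h1 : tp P R (↑p.2 : P) • b p.1 ∈ F.deg (d p.1 + ↑p.2) :=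
      F.tp_smul_mem _ p.2.2 _ _ (hb p.1)
    have h2 : term p ∈ F.deg (f p) := by
      simp only [hterm, hz, smul_assoc]
      exact Submodule.smul_mem _ _ h1
    rw [hp.2] at h2
    exact h2
  -- the sum over `T` of the components recovers `x`
  have hrow : ∀ η ∈ A, (∑ u ∈ B, term (η, u)) = c η • b η := by
    intro η hη
    have hsubset : (c η).coeff.support ⊆ B := by
      rw [hB]
      exact Finset.subset_biUnion_of_mem (fun η => (c η).coeff.support) hη
    have h1 : ∑ u ∈ B, term (η, u) = ∑ u ∈ (c η).coeff.support, term (η, u) := by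
      refine (Finset.sum_subset hsubset ?_).symm
      intro u _ hu'
      rw [Finsupp.notMem_support_iff] at hu'
      simp only [hterm, hz, hu', zero_smul]
    have h2 : ∀ u ∈ (c η).coeff.support, term (η, u) = (AddMonoidAlgebra.single u ((c η).coeff u)) • b η := by
      intro u _
      simp only [hterm, hz]
      rw [tp_coe, AddMonoidAlgebra.smul_single', mul_one]
    rw [h1, Finset.sum_congr rfl h2, ← Finset.sum_smul]
    congr 1
    exact AddMonoidAlgebra.sum_coeff_single (c η)
  have hsum : ∑ a ∈ T, g a = x := by
    rw [hg]
    rw [Finset.sum_fiberwise_of_maps_to (fun p hp => Finset.mem_image_of_mem f hp)]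
    rw [hs, Finset.sum_product]
    rw [Finset.sum_congr rfl hrow]
    have := b.linearCombination_repr x
    rwa [Finsupp.linearCombination_apply, Finsupp.sum] at this
  -- uniqueness of homogeneous decomposition
  have hkey : (∑ a ∈ T, DirectSum.of (fun a => ↥(F.deg a)) a ⟨g a, hga a⟩)
      = DirectSum.of (fun a => ↥(F.deg a)) i ⟨x, hx⟩ := by
    apply F.isInternal.injective
    rw [map_sum]
    simp only [DirectSum.coeAddMonoidHom_of]
    simpa using hsum
  set a₀ : P := d η + ↑u with ha₀
  have hga₀ : g a₀ = 0 := by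
    by_cases hTmem : a₀ ∈ T
    · have h1 := congrArg (fun w => w a₀) hkey
      simp only at h1
      rw [DFinsupp.finset_sum_apply] at h1
      have h2 : ∑ a ∈ T, ((DirectSum.of (fun a => ↥(F.deg a)) a) ⟨g a, hga a⟩) a₀
          = ((DirectSum.of (fun a => ↥(F.deg a)) a₀) ⟨g a₀, hga a₀⟩) a₀ :=
        Finset.sum_eq_single_of_mem a₀ hTmem
          (fun a _ hne' => DirectSum.of_eq_of_ne (β := fun a => ↥(F.deg a)) _ _ _ hne'.symm)
      rw [h2, DirectSum.of_eq_same,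
        DirectSum.of_eq_of_ne (β := fun a => ↥(F.deg a)) _ _ _ hne] at h1
      exact congrArg Subtype.val h1
    · have hempty : s.filter (fun p => f p = a₀) = ∅ := by
        rw [Finset.filter_eq_empty_iff]
        intro p hp hfp
        exact hTmem (hfp ▸ Finset.mem_image_of_mem f hp)
      rw [hg]
      simp only [hempty, Finset.sum_empty]
  -- extract the coordinate and contradict `hu`
  have hA' : η ∈ A := by
    rw [hA, Finsupp.mem_support_iff]
    intro h0
    apply hu
    rw [h0]
    rfl
  have hB' : u ∈ B := by
    rw [hB]
    exact Finset.mem_biUnion.mpr ⟨η, hA', Finsupp.mem_support_iff.mpr (by exact hu)⟩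
  have hmemfil : (η, u) ∈ s.filter (fun p => f p = a₀) := by
    rw [Finset.mem_filter]
    exact ⟨Finset.mem_product.mpr ⟨hA', hB'⟩, rfl⟩
  have hrepr0 : b.repr (g a₀) = 0 := by rw [hga₀, map_zero]
  have hreprg : b.repr (g a₀) = ∑ p ∈ s.filter (fun p => f p = a₀),
      Finsupp.single p.1 (z p) := by
    rw [hg]
    simp only
    rw [map_sum]
    refine Finset.sum_congr rfl fun p _ => ?_
    rw [hterm]
    simp only
    rw [map_smul, Module.Basis.repr_self, Finsupp.smul_single', mul_one]
  have heval : (0 : R) = (c η).coeff u := by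
    have h1 := congrArg (fun w => ((w η : PersAlg P R).coeff u : R)) (hrepr0.symm.trans hreprg)
    simp only [Finsupp.coe_zero, Pi.zero_apply, AddMonoidAlgebra.coeff_zero] at h1
    rw [Finset.sum_apply', AddMonoidAlgebra.coeff_sum, Finset.sum_apply'] at h1
    have h2 : ∀ p ∈ s.filter (fun p => f p = a₀),
        ((Finsupp.single p.1 (z p) : Λ →₀ PersAlg P R) η : PersAlg P R).coeff u
          = if p = (η, u) then (c η).coeff u else 0 := by
      intro p hp
      rcases eq_or_ne p.1 η with h3 | h3
      · rw [Finsupp.single_apply, if_pos h3]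
        rcases eq_or_ne p.2 u with h4 | h4
        · have hpeq : p = (η, u) := Prod.ext h3 h4
          rw [if_pos hpeq, hz]
          simp only
          rw [hpeq]
          simp only
          rw [tp_coe, AddMonoidAlgebra.smul_single', mul_one, AddMonoidAlgebra.coeff_single, Finsupp.single_eq_same]
        · rw [if_neg (fun h => h4 (by rw [h]))]
          rw [hz]
          simp only
          rw [tp_coe, AddMonoidAlgebra.smul_single', mul_one, AddMonoidAlgebra.coeff_single, Finsupp.single_eq_of_ne' h4]
      · rw [Finsupp.single_apply, if_neg h3, if_neg (fun h => h3 (by rw [h]))]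
        rfl
    rw [Finset.sum_congr rfl h2, Finset.sum_ite_eq' _ (η, u), if_pos hmemfil] at h1
    exact h1
  exact hu heval.symm

/-- The coefficient of `b η` in a homogeneous `x ∈ F_i` is a monomial of degree `i - d η`. -/
lemma repr_single_form (hb : ∀ η, b η ∈ F.deg (d η)) {i : P} {x : F.carrier}
    (hx : x ∈ F.deg i) (η : Λ) (hη : η ∈ (b.repr x).support) :
    ∃ h : 0 ≤ i - d η, b.repr x η =
      AddMonoidAlgebra.single (⟨i - d η, h⟩ : ↥(AddSubmonoid.nonneg P))
        ((b.repr x η).coeff ⟨i - d η, h⟩) := by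
  classical
  have hcne : b.repr x η ≠ 0 := Finsupp.mem_support_iff.mp hη
  obtain ⟨u, hu⟩ := Finsupp.support_nonempty_iff.mpr (mt AddMonoidAlgebra.coeff_eq_zero.mp hcne)
  have hu' : (b.repr x η).coeff u ≠ 0 := Finsupp.mem_support_iff.mp hu
  have hdeg := repr_support_degree F d b hb hx η u hu'
  have hcoe : (↑u : P) = i - d η := by rw [← hdeg]; abel
  have h : 0 ≤ i - d η := hcoe ▸ u.2
  refine ⟨h, ?_⟩
  have hu0 : u = (⟨i - d η, h⟩ : ↥(AddSubmonoid.nonneg P)) := Subtype.ext hcoe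
  rw [← hu0]
  ext v
  rcases eq_or_ne v u with h5 | h5
  · rw [h5, AddMonoidAlgebra.coeff_single, Finsupp.single_eq_same]
  · rw [AddMonoidAlgebra.coeff_single, Finsupp.single_eq_of_ne' (Ne.symm h5)]
    by_contra h6
    have hv := repr_support_degree F d b hb hx η v h6
    exact h5 (Subtype.ext (by
      have : d η + (↑v : P) = d η + (↑u : P) := by rw [hdeg, hv]
      exact add_left_cancel this))

/-- If all basis degrees in the support of `x ∈ F_i` are `≤ ℓ ≤ i`, then `x` is divisible
by `t^{i-ℓ}` from degree `ℓ`. -/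
lemma exists_div (hb : ∀ η, b η ∈ F.deg (d η)) {i ℓ : P} (hℓ : ℓ ≤ i) {x : F.carrier}
    (hx : x ∈ F.deg i) (hd : ∀ η ∈ (b.repr x).support, d η ≤ ℓ) :
    ∃ y ∈ F.deg ℓ, tp P R (i - ℓ) • y = x := by
  classical
  refine ⟨∑ η ∈ (b.repr x).support,
    (if h : 0 ≤ i - d η then (b.repr x η).coeff ⟨i - d η, h⟩ else 0) • (tp P R (ℓ - d η) • b η),
    ?_, ?_⟩
  · refine Submodule.sum_mem _ fun η hη => ?_
    have h1 : (0:P) ≤ ℓ - d η := sub_nonneg.mpr (hd η hη)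
    have h2 := F.tp_smul_mem _ h1 _ _ (hb η)
    have h3 : d η + (ℓ - d η) = ℓ := by abel
    rw [h3] at h2
    exact Submodule.smul_mem _ _ h2
  · rw [Finset.smul_sum]
    have hterm : ∀ η ∈ (b.repr x).support,
        tp P R (i - ℓ) • ((if h : 0 ≤ i - d η then (b.repr x η).coeff ⟨i - d η, h⟩ else 0) •
          (tp P R (ℓ - d η) • b η)) = b.repr x η • b η := by
      intro η hη
      obtain ⟨h, hsingle⟩ := repr_single_form F d b hb hx η hη
      rw [dif_pos h]
      rw [smul_comm, smul_smul, tp_mul _ _ (sub_nonneg.mpr hℓ) (sub_nonneg.mpr (hd η hη))]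
      have h4 : i - ℓ + (ℓ - d η) = i - d η := by abel
      rw [h4, ← smul_assoc]
      congr 1
      rw [tp_pos (i - d η) h, AddMonoidAlgebra.smul_single', mul_one]
      exact hsingle.symm
    rw [Finset.sum_congr rfl hterm]
    have := b.linearCombination_repr x
    rwa [Finsupp.linearCombination_apply, Finsupp.sum] at this

/-- Conversely, divisibility by `t^{i-ℓ}` forces all basis degrees in the support to be `≤ ℓ`. -/
lemma le_of_div (hb : ∀ η, b η ∈ F.deg (d η)) {i ℓ : P} (hℓ : ℓ ≤ i) {x y : F.carrier}
    (hx : x ∈ F.deg i) (hxy : tp P R (i - ℓ) • y = x) :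
    ∀ η ∈ (b.repr x).support, d η ≤ ℓ := by
  classical
  intro η hη
  obtain ⟨h, hsingle⟩ := repr_single_form F d b hb hx η hη
  have hcne : b.repr x η ≠ 0 := Finsupp.mem_support_iff.mp hη
  have hcu : (b.repr x η).coeff (⟨i - d η, h⟩ : ↥(AddSubmonoid.nonneg P)) ≠ 0 := by
    intro h0
    rw [h0] at hsingle
    exact hcne (by rw [hsingle]; simp)
  have hu₀ : (⟨i - d η, h⟩ : ↥(AddSubmonoid.nonneg P)) ∈ (b.repr x η).coeff.support :=
    Finsupp.mem_support_iff.mpr hcu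
  have hrepr : b.repr x η = tp P R (i - ℓ) * b.repr y η := by
    rw [← hxy, map_smul, Finsupp.smul_apply, smul_eq_mul]
  rw [hrepr] at hu₀
  have hmem := AddMonoidAlgebra.support_coeff_mul_subset (tp P R (i - ℓ)) (b.repr y η) hu₀
  rw [Finset.mem_add] at hmem
  obtain ⟨v, hv, w, hw, hvw⟩ := hmem
  have hℓ' : (0:P) ≤ i - ℓ := sub_nonneg.mpr hℓ
  have hv' : v = (⟨i - ℓ, hℓ'⟩ : ↥(AddSubmonoid.nonneg P)) := by
    rw [tp_pos (i - ℓ) hℓ', AddMonoidAlgebra.coeff_single] at hv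
    exact Finset.mem_singleton.mp (Finsupp.support_single_subset hv)
  have hcoe : (i - ℓ) + (↑w : P) = i - d η := by
    have := congrArg Subtype.val hvw
    simpa [hv'] using this
  have hw0 : (↑w : P) = ℓ - d η := by
    have h5 : i - ℓ + (ℓ - d η) = i - d η := by abel
    have := hcoe.trans h5.symm
    exact add_left_cancel this
  have : (0:P) ≤ ℓ - d η := hw0 ▸ w.2
  exact sub_nonneg.mp this

end aux

theorem exists_minimal_birth [IsDomain R] [IsPrincipalIdealRing R]
    (M : PersMod P R) (hproj : IsGradedProjective P R M) (hFG : ∀ a : P, (M.deg a).FG)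
    (i : P) (hi : M.deg i ≠ ⊥) :
    ∃ μ ∈ {ℓ : P | ℓ ≤ i ∧ ∃ x ∈ M.deg i, x ≠ 0 ∧ ∃ y ∈ M.deg ℓ, tp P R (i - ℓ) • y = x},
      ∀ s ∈ {ℓ : P | ℓ ≤ i ∧ ∃ x ∈ M.deg i, x ≠ 0 ∧ ∃ y ∈ M.deg ℓ, tp P R (i - ℓ) • y = x},
        ¬ s < μ := by
  classical
  obtain ⟨F, ⟨Λ, d, b, hb⟩, ι, π, hι, hπ, hπι⟩ := hproj
  have hπι' : ∀ x, π (ι x) = x := fun x => congrArg (fun f => f x) (congrArg (fun f => f.toFun) hπι)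
  -- nonzero elements have nonempty support
  have hsupp_ne : ∀ x : M.carrier, x ≠ 0 → ((b.repr (ι x)).support).Nonempty := by
    intro x hx
    rw [Finsupp.support_nonempty_iff]
    intro h0
    have h1 : ι x = 0 := by
      have := b.repr.injective (a₁ := ι x) (a₂ := 0) (by rw [h0, map_zero])
      exact this
    exact hx (by rw [← hπι' x, h1, map_zero])
  set μf : M.carrier → P := fun x =>
    if h : ((b.repr (ι x)).support).Nonempty then ((b.repr (ι x)).support).sup' h d else i
    with hμf
  -- Claim B: μf x is a birth degree of x
  have claimB : ∀ x, x ∈ M.deg i → x ≠ 0 →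
      μf x ≤ i ∧ ∃ y ∈ M.deg (μf x), tp P R (i - μf x) • y = x := by
    intro x hx hx0
    have hne := hsupp_ne x hx0
    have hιx : ι x ∈ F.deg i := hι i x hx
    have hμ : μf x = ((b.repr (ι x)).support).sup' hne d := by
      simp only [hμf]
      rw [dif_pos hne]
    have hdle : ∀ η ∈ (b.repr (ι x)).support, d η ≤ i := by
      intro η hη
      obtain ⟨h, -⟩ := repr_single_form F d b hb hιx η hη
      exact sub_nonneg.mp h
    have hμi : μf x ≤ i := by
      rw [hμ]
      exact Finset.sup'_le _ _ hdle
    obtain ⟨y, hy, hxy⟩ := exists_div F d b hb hμi hιx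
      (fun η hη => by rw [hμ]; exact Finset.le_sup' d hη)
    refine ⟨hμi, π y, hπ _ _ hy, ?_⟩
    rw [← map_smul π, hxy, hπι']
  -- Claim C: μf x is below every birth degree of x
  have claimC : ∀ ℓ, ℓ ≤ i → ∀ x, x ∈ M.deg i → x ≠ 0 →
      ∀ y ∈ M.deg ℓ, tp P R (i - ℓ) • y = x → μf x ≤ ℓ := by
    intro ℓ hℓi x hx hx0 y hy hxy
    have hιx : ι x ∈ F.deg i := hι i x hx
    have hxyF : tp P R (i - ℓ) • (ι y) = ι x := by rw [← map_smul ι, hxy]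
    have hne := hsupp_ne x hx0
    have hμ : μf x = ((b.repr (ι x)).support).sup' hne d := by
      simp only [hμf]
      rw [dif_pos hne]
    rw [hμ]
    exact Finset.sup'_le _ _ (le_of_div F d b hb hℓi hιx hxyF)
  -- finiteness of the set of possible values of μf
  obtain ⟨G, hG⟩ := hFG i
  have hsub : ∀ x ∈ M.deg i, (b.repr (ι x)).support ⊆ G.biUnion (fun g => (b.repr (ι g)).support) := by
    intro x hx
    rw [← hG, Submodule.mem_span_finset] at hx
    obtain ⟨f, -, hf⟩ := hx
    have hrx : b.repr (ι x) = ∑ g ∈ G, f g • b.repr (ι g) := by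
      rw [← hf, map_sum, map_sum]
      · refine Finset.sum_congr rfl fun g _ => ?_
        rw [LinearMap.map_smul_of_tower ι (f g) g]
        exact map_smul (b.repr.restrictScalars R : F.carrier →ₗ[R] (Λ →₀ PersAlg P R)) (f g) (ι g)
    rw [hrx]
    refine Finsupp.support_finset_sum.trans ?_
    intro η hη
    rw [Finset.mem_biUnion] at hη ⊢
    obtain ⟨g, hg, hηg⟩ := hη
    exact ⟨g, hg, Finsupp.support_smul hηg⟩
  set Ξ : Finset Λ := G.biUnion (fun g => (b.repr (ι g)).support) with hΞ
  set V : Finset P := Ξ.powerset.image (fun t => if h : t.Nonempty then t.sup' h d else i) with hV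
  set T : Set P := {p | ∃ x, x ∈ M.deg i ∧ x ≠ 0 ∧ μf x = p} with hT
  have hTV : T ⊆ ↑V := by
    rintro p ⟨x, hx, hx0, rfl⟩
    have hne := hsupp_ne x hx0
    rw [hV, Finset.coe_image]
    refine ⟨(b.repr (ι x)).support, Finset.mem_coe.mpr (Finset.mem_powerset.mpr (hsub x hx)), ?_⟩
    simp only [hμf, dif_pos hne]
  have hTfin : T.Finite := Set.Finite.subset V.finite_toSet hTV
  obtain ⟨x₀, hx₀, hx00⟩ := (Submodule.ne_bot_iff _).mp hi
  have hTne : T.Nonempty := ⟨μf x₀, x₀, hx₀, hx00, rfl⟩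
  obtain ⟨μ, hμT, hμmin⟩ : ∃ μ ∈ T, ∀ a ∈ T, id a ≤ id μ → id μ = id a := by
    obtain ⟨μ, hμT, hm⟩ := Set.Finite.exists_minimalFor id T hTfin hTne
    exact ⟨μ, hμT, fun a ha h => le_antisymm (hm ha h) h⟩
  obtain ⟨x₁, hx₁, hx10, hμeq⟩ := hμT
  have hBx₁ := claimB x₁ hx₁ hx10
  refine ⟨μ, ⟨hμeq ▸ hBx₁.1, x₁, hx₁, hx10, hμeq ▸ hBx₁.2⟩, ?_⟩
  rintro s ⟨hsi, x₂, hx₂, hx20, y₂, hy₂, hxy₂⟩ hlt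
  have hle : μf x₂ ≤ s := claimC s hsi x₂ hx₂ hx20 y₂ hy₂ hxy₂
  have h1 : μf x₂ ∈ T := ⟨x₂, hx₂, hx20, rfl⟩
  have h2 : id (μf x₂) ≤ id μ := le_trans hle (le_of_lt hlt)
  have h3 : μ = μf x₂ := hμmin _ h1 h2
  have : μ ≤ s := by rw [h3]; exact hle
  exact absurd (lt_of_lt_of_le hlt this) (lt_irrefl s)
end

section
/- Under the standing hypotheses, fix i ∈ P and, for each r < i, elements e_1^r, …, e_{b_r}^r ∈ M_r whose cosets modulo D_r form an R-basis of M_r/D_r. Then the family { t^{i−r} e_j^r : r < i, 1 ≤ j ≤ b_r } is R-linearly independent in M_i. -/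
open scoped DirectSum

variable (P : Type) [AddCommGroup P] [Lattice P]
  [CovariantClass P P (· + ·) (· ≤ ·)] [DecidableEq P]
variable (R : Type) [CommRing R]

section ImagesLIAux

variable {P R}

theorem ImagesLI.le_sub [inst : CovariantClass P P (· + ·) (· ≤ ·)] {x y : P} (h : x ≤ y) :
    (0 : P) ≤ y - x := by
  have h2 := add_le_add_right h (-x)
  rwa [neg_add_cancel, ← sub_eq_neg_add] at h2

theorem ImagesLI.sub_le [inst : CovariantClass P P (· + ·) (· ≤ ·)] {x y : P}
    (h : (0 : P) ≤ y - x) : x ≤ y := by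
  have h2 := add_le_add_right h x
  rwa [add_zero, add_comm, sub_add_cancel] at h2

theorem ImagesLI.add_lt [inst : CovariantClass P P (· + ·) (· ≤ ·)] {x s : P} (h : 0 < s) :
    x < x + s := by
  refine lt_of_le_of_ne ?_ ?_
  · have := add_le_add_right h.le x
    rwa [add_zero] at this
  · intro he
    exact h.ne (add_left_cancel (a := x) (by rw [add_zero, ← he])).symm

theorem ImagesLI.tp_eq (u : P) (hu : 0 ≤ u) :
    tp P R u = AddMonoidAlgebra.single (⟨u, hu⟩ : ↥(AddSubmonoid.nonneg P)) 1 := by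
  rw [tp, dif_pos hu]

end ImagesLIAux

theorem images_linearIndependent [IsDomain R] [IsPrincipalIdealRing R]
    (M : PersMod P R) (hproj : IsGradedProjective P R M) (hFG : ∀ a : P, (M.deg a).FG)
    (i : P) (n : P → ℕ) (e : (r : P) → Fin (n r) → M.carrier)
    (hdeg : ∀ r, r < i → ∀ j, e r j ∈ M.deg r)
    (hli : ∀ r, r < i → LinearIndependent R (fun j => (Dsub P R M r).mkQ (e r j)))
    (hspan : ∀ r, r < i → Submodule.span R (Set.range fun j => (Dsub P R M r).mkQ (e r j)) =
      Submodule.map (Dsub P R M r).mkQ (M.deg r)) :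
    LinearIndependent R
      (fun p : Σ r : {r : P // r < i}, Fin (n r.1) => tp P R (i - p.1.1) • e p.1.1 p.2) := by
  classical
  obtain ⟨F, ⟨Λ, d, b, hb⟩, iM, piM, hiM, hpiM, hcomp⟩ := hproj
  have hpi_iM : ∀ x : M.carrier, piM (iM x) = x := fun x => DFunLike.congr_fun hcomp x
  set U := AddSubmonoid.nonneg P with hU
  -- the coefficient functional
  set coeff : Λ → U → (F.carrier →ₗ[R] R) := fun η s =>
    (Finsupp.lapply s) ∘ₗ (AddMonoidAlgebra.coeffLinearEquiv R).toLinearMap ∘ₗ (Finsupp.lapply η) ∘ₗ (b.repr.restrictScalars R).toLinearMap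
    with hcoeff
  have coeff_apply : ∀ η s x, coeff η s x = (b.repr x η).coeff s := fun _ _ _ => rfl
  -- the R-basis of F indexed by Λ × U
  set B : Module.Basis (Λ × U) R F.carrier :=
    Module.Basis.ofRepr ((b.repr.restrictScalars R) ≪≫ₗ Finsupp.mapRange.linearEquiv (AddMonoidAlgebra.coeffLinearEquiv R) ≪≫ₗ (Finsupp.finsuppProdLEquiv R).symm) with hBdef
  have hBrepr : ∀ (x : F.carrier) (p : Λ × U), B.repr x p = (b.repr x p.1).coeff p.2 := by
    intro x p
    show (Finsupp.finsuppProdLEquiv R).symm (Finsupp.mapRange.linearEquiv (AddMonoidAlgebra.coeffLinearEquiv R) (b.repr x)) p = _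
    rw [Finsupp.finsuppProdLEquiv, Finsupp.curryLinearEquiv_symm_apply_apply]
    rfl
  have hB : ∀ (η : Λ) (s : U),
      B (η, s) = (AddMonoidAlgebra.single s 1 : PersAlg P R) • b η := by
    intro η s
    apply B.repr.injective
    rw [B.repr_self]
    ext p
    obtain ⟨η', s'⟩ := p
    rw [hBrepr, map_smul, b.repr_self]
    simp only [Finsupp.smul_apply, smul_eq_mul, Finsupp.single_apply, Prod.mk.injEq]
    by_cases h1 : η = η'
    · subst h1
      simp only [if_pos rfl, mul_one, true_and]
      by_cases h2 : s = s'
      · subst h2; simp [AddMonoidAlgebra.coeff_single, Finsupp.single_apply]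
      · simp [AddMonoidAlgebra.coeff_single, Finsupp.single_apply, h2, Ne.symm h2]
    · simp [h1, Ne.symm h1]
  -- homogeneous pieces of basis vectors
  have hBmem : ∀ (η : Λ) (s : U),
      (AddMonoidAlgebra.single s 1 : PersAlg P R) • b η ∈ F.deg (d η + s.1) := by
    intro η s
    have := F.tp_smul_mem s.1 s.2 (d η) (b η) (hb η)
    rwa [ImagesLI.tp_eq s.1 s.2, Subtype.coe_eta] at this
  -- projections from the internal decomposition
  set E := LinearEquiv.ofBijective (DirectSum.coeLinearMap F.deg) F.isInternal with hE
  set proj : P → (F.carrier →ₗ[R] F.carrier) := fun a =>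
    (F.deg a).subtype ∘ₗ (DFinsupp.lapply a) ∘ₗ E.symm.toLinearMap with hprojdef
  have hproj_same : ∀ (a : P) (x : F.carrier), x ∈ F.deg a → proj a x = x := by
    intro a x hx
    show ((E.symm x) a : F.carrier) = x
    rw [F.isInternal.ofBijective_coeLinearMap_of_mem hx]
  have hproj_ne : ∀ (a a' : P), a ≠ a' → ∀ x ∈ F.deg a, proj a' x = 0 := by
    intro a a' hne x hx
    show ((E.symm x) a' : F.carrier) = 0
    rw [F.isInternal.ofBijective_coeLinearMap_of_mem_ne hne hx]
    rfl
  -- Lemma 1 : coefficients of homogeneous elements are supported in matching degrees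
  have lemma1 : ∀ (a : P) (x : F.carrier), x ∈ F.deg a → ∀ (η : Λ) (s : U),
      d η + s.1 ≠ a → (b.repr x η).coeff s = 0 := by
    intro a x hx η s hne
    have hzero : (coeff η s) ∘ₗ proj a = 0 := by
      apply B.ext
      rintro ⟨η', s'⟩
      rw [hB]
      simp only [LinearMap.comp_apply, LinearMap.zero_apply]
      by_cases hc : d η' + s'.1 = a
      · rw [hproj_same a _ (hc ▸ hBmem η' s')]
        have : coeff η s ((AddMonoidAlgebra.single s' 1 : PersAlg P R) • b η')
            = B.repr (B (η', s')) (η, s) := by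
          rw [hB, hBrepr]; rfl
        rw [this, B.repr_self]
        refine Finsupp.single_eq_of_ne ?_
        intro h
        apply hne
        have h1 : η' = η := (congrArg Prod.fst h).symm
        have h2 : s' = s := (congrArg Prod.snd h).symm
        subst h1
        subst h2
        exact hc
      · rw [hproj_ne _ _ hc _ (hBmem η' s'), map_zero]
    have h1 : coeff η s x = coeff η s (proj a x) := by rw [hproj_same a x hx]
    have h2 : coeff η s (proj a x) = ((coeff η s) ∘ₗ proj a) x := rfl
    rw [← coeff_apply, h1, h2, hzero, LinearMap.zero_apply]
  -- Lemma 2 : a homogeneous element with vanishing constant coefficients lies in D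
  have lemma2 : ∀ (a : P) (z : F.carrier), z ∈ F.deg a →
      (∀ η : Λ, (b.repr z η).coeff 0 = 0) → z ∈ Dsub P R F a := by
    intro a z hz h0
    have hexp : z = (b.repr z).sum fun η c => c • b η := by
      have h := b.linearCombination_repr z
      rw [Finsupp.linearCombination_apply] at h
      exact h.symm
    rw [hexp, Finsupp.sum]
    apply Submodule.sum_mem
    intro η hη
    have hsingle : (b.repr z η) • b η
        = ∑ s ∈ (b.repr z η).coeff.support,
            ((b.repr z η).coeff s) • ((AddMonoidAlgebra.single s 1 : PersAlg P R) • b η) := by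
      conv_lhs => rw [← AddMonoidAlgebra.sum_coeff_single (b.repr z η)]
      rw [Finsupp.sum, Finset.sum_smul]
      apply Finset.sum_congr rfl
      intro s hs
      rw [← smul_assoc]
      congr 1
      rw [AddMonoidAlgebra.smul_single, smul_eq_mul, mul_one]
    rw [hsingle]
    apply Submodule.sum_mem
    intro s hs
    apply Submodule.smul_mem
    have hcs : (b.repr z η).coeff s ≠ 0 := Finsupp.mem_support_iff.mp hs
    have hds : d η + s.1 = a := by
      by_contra hcon
      exact hcs (lemma1 a z hz η s hcon)
    have hs0 : s.1 ≠ 0 := by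
      intro h
      apply hcs
      have : s = (0 : U) := Subtype.ext h
      rw [this]
      exact h0 η
    have hlt : d η < a := by
      rw [← hds]
      exact ImagesLI.add_lt (lt_of_le_of_ne s.2 (Ne.symm hs0))
    apply Submodule.mem_iSup_of_mem (⟨d η, hlt⟩ : {q : P // q < a})
    refine ⟨b η, hb η, ?_⟩
    show tp P R (a - d η) • b η = _
    rw [ImagesLI.tp_eq (a - d η) (ImagesLI.le_sub hlt.le)]
    have hval : (⟨a - d η, ImagesLI.le_sub hlt.le⟩ : U) = s :=
      Subtype.ext (by show a - d η = (s : P); rw [← hds]; exact add_sub_cancel_left (d η) ↑s)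
    exact congrArg (fun u : U => (AddMonoidAlgebra.single u (1 : R) : PersAlg P R) • b η) hval
  -- pi maps D_r(F) into D_r(M)
  have hpiD : ∀ (r : P) (x : F.carrier), x ∈ Dsub P R F r → piM x ∈ Dsub P R M r := by
    intro r x hx
    have hle : Dsub P R F r ≤ Submodule.comap (piM.restrictScalars R) (Dsub P R M r) := by
      apply iSup_le
      rintro ⟨q, hq⟩
      rintro y ⟨w, hw, rfl⟩
      simp only [Submodule.mem_comap, LinearMap.restrictScalars_apply]
      show piM (tp P R (r - q) • w) ∈ _
      rw [map_smul]
      exact Submodule.mem_iSup_of_mem (⟨q, hq⟩ : {q' : P // q' < r})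
        ⟨piM w, hpiM q w hw, rfl⟩
    exact hle hx
  -- independence modulo D_m(F) of the images iM (e m j)
  have hliF : ∀ (m : P), m < i → ∀ c : Fin (n m) → R,
      (∑ j, c j • iM (e m j)) ∈ Dsub P R F m → ∀ j, c j = 0 := by
    intro m hm c hc j
    have h1 : piM (∑ j, c j • iM (e m j)) = ∑ j, c j • e m j := by
      rw [map_sum piM (fun j => c j • iM (e m j)) Finset.univ]
      apply Finset.sum_congr rfl
      intro j' _
      rw [LinearMap.map_smul_of_tower, hpi_iM]
    have h2 : (∑ j, c j • e m j) ∈ Dsub P R M m := h1 ▸ hpiD m _ hc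
    have h3 : ∑ j, c j • (Dsub P R M m).mkQ (e m j) = 0 := by
      have heq : ∑ j, c j • (Dsub P R M m).mkQ (e m j)
          = (Dsub P R M m).mkQ (∑ j, c j • e m j) := by
        rw [map_sum]
        exact Finset.sum_congr rfl fun j' _ => (map_smul _ _ _).symm
      rw [heq, Submodule.mkQ_apply, Submodule.Quotient.mk_eq_zero]
      exact h2
    exact Fintype.linearIndependent_iff.mp (hli m hm) c h3 j
  -- main argument
  rw [linearIndependent_iff]
  intro g hg
  by_contra hgne
  obtain ⟨p₀, hp₀⟩ := Finsupp.support_nonempty_iff.mpr hgne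
  set T : Finset {r : P // r < i} := g.support.image Sigma.fst with hT
  have hTne : T.Nonempty := ⟨p₀.1, Finset.mem_image_of_mem _ hp₀⟩
  obtain ⟨m, hmT, hmax⟩ := T.exists_maximal hTne
  set f : (Σ r : {r : P // r < i}, Fin (n r.1)) → F.carrier :=
    fun p => iM (e p.1.1 p.2) with hf
  set z : F.carrier := ∑ j, g ⟨m, j⟩ • iM (e m.1 j) with hz
  have hzdeg : z ∈ F.deg m.1 :=
    Submodule.sum_mem _ fun j _ => Submodule.smul_mem _ _ (hiM m.1 _ (hdeg m.1 m.2 j))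
  have hs₀ : (0 : P) ≤ i - m.1 := ImagesLI.le_sub m.2.le
  set s₀ : U := ⟨i - m.1, hs₀⟩ with hs₀def
  -- the key coefficient computation
  have hcoeffz : ∀ η : Λ, (b.repr z η).coeff 0 = 0 := by
    intro η
    have h0 : coeff η s₀ (iM (Finsupp.linearCombination R
        (fun p : Σ r : {r : P // r < i}, Fin (n r.1) => tp P R (i - p.1.1) • e p.1.1 p.2) g))
        = 0 := by
      rw [hg, map_zero, map_zero]
    rw [Finsupp.linearCombination_apply, Finsupp.sum, map_sum, map_sum] at h0
    have hterm : ∀ p ∈ g.support,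
        coeff η s₀ (iM (g p • (tp P R (i - p.1.1) • e p.1.1 p.2)))
        = if p.1 = m then g p • (b.repr (f p) η).coeff 0 else 0 := by
      intro p hp
      have e1 : iM (g p • (tp P R (i - p.1.1) • e p.1.1 p.2))
          = g p • (tp P R (i - p.1.1) • f p) := by
        rw [LinearMap.map_smul_of_tower, LinearMap.map_smul]
      rw [e1, map_smul]
      have hp1 : p.1.1 < i := p.1.2
      have hfp : coeff η s₀ (tp P R (i - p.1.1) • f p)
          = ((AddMonoidAlgebra.single (⟨i - p.1.1, ImagesLI.le_sub hp1.le⟩ : U) 1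
              * b.repr (f p) η : PersAlg P R)).coeff s₀ := by
        rw [ImagesLI.tp_eq (i - p.1.1) (ImagesLI.le_sub hp1.le), coeff_apply,
          map_smul, Finsupp.smul_apply, smul_eq_mul]
      by_cases hpm : p.1 = m
      · rw [if_pos hpm]
        congr 1
        rw [hfp]
        have hp11 : p.1.1 = m.1 := by rw [hpm]
        have hsma := AddMonoidAlgebra.coeff_single_mul_eq_mul_coeff (x := b.repr (f p) η)
          (r := (1 : R)) (m := (⟨i - p.1.1, ImagesLI.le_sub hp1.le⟩ : U)) (m₁ := s₀) (0 : U) ?_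
        · rw [hsma, one_mul]
        · intro a _
          constructor
          · intro h
            have h' : (i - p.1.1) + (a : P) = i - m.1 := congrArg Subtype.val h
            rw [hp11] at h'
            refine Subtype.ext ?_
            have : (i - m.1) + (a : P) = (i - m.1) + 0 := by rw [h', add_zero]
            exact add_left_cancel this
          · rintro rfl
            refine Subtype.ext ?_
            show (i - p.1.1 : P) + 0 = i - m.1
            rw [add_zero, hp11]
      · rw [if_neg hpm, hfp]
        rw [AddMonoidAlgebra.coeff_single_mul_of_forall_add_ne _ _
          (fun d hd => (show ¬∃ dd, s₀ = _ + dd from ?_) ⟨d, hd.symm⟩), smul_zero]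
        rintro ⟨dd, hdd⟩
        apply hpm
        have hle : m.1 ≤ p.1.1 := by
          apply ImagesLI.sub_le
          have h1 : (i - m.1 : P) = (i - p.1.1) + dd.1 := congrArg Subtype.val hdd
          have h2 : p.1.1 - m.1 = (i - m.1) - (i - p.1.1) :=
            (sub_sub_sub_cancel_left m.1 p.1.1 i).symm
          rw [h2, h1, add_sub_cancel_left]
          exact dd.2
        have hmem : p.1 ∈ T := Finset.mem_image_of_mem _ hp
        have : ¬ m < p.1 := fun h => lt_irrefl m (lt_of_lt_of_le h (hmax hmem h.le))
        have hle' : m ≤ p.1 := hle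
        rcases lt_or_eq_of_le hle' with h | h
        · exact absurd h this
        · exact h.symm
    rw [Finset.sum_congr rfl hterm] at h0
    -- reindex the sum over the fiber above m
    set S : Finset (Σ r : {r : P // r < i}, Fin (n r.1)) :=
      Finset.univ.map ⟨Sigma.mk m, sigma_mk_injective⟩ with hS
    have hmemS : ∀ p : (Σ r : {r : P // r < i}, Fin (n r.1)), p.1 = m → p ∈ S := by
      rintro ⟨r, j⟩ hr
      subst hr
      exact Finset.mem_map.mpr ⟨j, Finset.mem_univ j, rfl⟩
    have hsum1 : (∑ p ∈ g.support, if p.1 = m then g p • (b.repr (f p) η).coeff 0 else 0)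
        = ∑ p ∈ g.support ∪ S, if p.1 = m then g p • (b.repr (f p) η).coeff 0 else 0 := by
      apply Finset.sum_subset Finset.subset_union_left
      intro p _ hnp
      rw [Finsupp.notMem_support_iff.mp hnp]
      simp
    have hsum2 : (∑ p ∈ g.support ∪ S, if p.1 = m then g p • (b.repr (f p) η).coeff 0 else 0)
        = ∑ p ∈ S, if p.1 = m then g p • (b.repr (f p) η).coeff 0 else 0 := by
      symm
      apply Finset.sum_subset Finset.subset_union_right
      intro p _ hnp
      rw [if_neg (fun h => hnp (hmemS p h))]
    have hsum3 : (∑ p ∈ S, if p.1 = m then g p • (b.repr (f p) η).coeff 0 else 0)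
        = ∑ j : Fin (n m.1), g ⟨m, j⟩ • (b.repr (iM (e m.1 j)) η).coeff 0 := by
      rw [hS, Finset.sum_map]
      simp only [Function.Embedding.coeFn_mk]
      apply Finset.sum_congr rfl
      intro j _
      rw [if_true]
    rw [hsum1, hsum2, hsum3] at h0
    have hfinal : (b.repr z η).coeff 0 = ∑ j : Fin (n m.1), g ⟨m, j⟩ • (b.repr (iM (e m.1 j)) η).coeff 0 := by
      rw [← coeff_apply, hz, map_sum]
      apply Finset.sum_congr rfl
      intro j _
      rw [map_smul, coeff_apply]
    rw [hfinal]
    exact h0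
  have hzD : z ∈ Dsub P R F m.1 := lemma2 m.1 z hzdeg hcoeffz
  have hall : ∀ j, g ⟨m, j⟩ = 0 := hliF m.1 m.2 (fun j => g ⟨m, j⟩) hzD
  obtain ⟨p, hpsupp, hpm⟩ := Finset.mem_image.mp hmT
  obtain ⟨r, j⟩ := p
  have hr : r = m := hpm
  subst hr
  exact (Finsupp.mem_support_iff.mp hpsupp) (hall j)
end

section
/- Under the standing hypotheses, choose for every r ∈ P elements e_1^r, …, e_{b_r}^r ∈ M_r whose cosets modulo D_r form an R-basis of M_r/D_r. Then the union B = ⋃_{r ∈ P} { e_1^r, …, e_{b_r}^r } is an R[U₀]-basis of M: every element of M is uniquely a finite R[U₀]-linear combination of elements of B. In particular, M is graded free. -/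
open scoped DirectSum

variable (P : Type) [AddCommGroup P] [Lattice P]
  [CovariantClass P P (· + ·) (· ≤ ·)] [DecidableEq P]
variable (R : Type) [CommRing R]

section Aux

instance (priority := 100) persOrdGrp : IsOrderedAddMonoid P :=
  { add_le_add_left := fun a b h c => by
      rw [add_comm a, add_comm b]; exact CovariantClass.elim c h }

set_option linter.unusedSectionVars false
variable {P R}

theorem tp_of_nonneg {p : P} (h : 0 ≤ p) :
    tp P R p = AddMonoidAlgebra.single (⟨p, h⟩ : ↥(AddSubmonoid.nonneg P)) 1 := by
  simp [tp, dif_pos h]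

theorem tp_of_neg {p : P} (h : ¬ 0 ≤ p) : tp P R p = 0 := by
  simp [tp, dif_neg h]

theorem tp_zero : tp P R (0 : P) = 1 := by
  rw [tp_of_nonneg le_rfl]
  rfl

theorem tp_mul_s13 {a b : P} (ha : 0 ≤ a) (hb : 0 ≤ b) :
    tp P R a * tp P R b = tp P R (a + b) := by
  rw [tp_of_nonneg ha, tp_of_nonneg hb, tp_of_nonneg (add_nonneg ha hb),
    AddMonoidAlgebra.single_mul_single, one_mul]
  rfl

theorem tp_mul_cancel {s : P} (hs : 0 ≤ s) {x y : PersAlg P R}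
    (h : tp P R s * x = tp P R s * y) : x = y := by
  rw [tp_of_nonneg hs] at h
  ext g
  have hx := AddMonoidAlgebra.coeff_single_mul_eq_mul_coeff (x := x) (r := 1)
      (m := (⟨s, hs⟩ : ↥(AddSubmonoid.nonneg P))) (m₁ := ⟨s, hs⟩ + g) g (fun a _ => by
        constructor
        · intro hh
          have := congrArg Subtype.val hh
          simpa using add_left_cancel this
        · rintro rfl; rfl)
  have hy := AddMonoidAlgebra.coeff_single_mul_eq_mul_coeff (x := y) (r := 1)
      (m := (⟨s, hs⟩ : ↥(AddSubmonoid.nonneg P))) (m₁ := ⟨s, hs⟩ + g) g (fun a _ => by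
        constructor
        · intro hh
          have := congrArg Subtype.val hh
          simpa using add_left_cancel this
        · rintro rfl; rfl)
  rw [← one_mul (x.coeff g), ← one_mul (y.coeff g), ← hx, ← hy, h]

noncomputable instance persDecomp (N : PersMod P R) : DirectSum.Decomposition N.deg :=
  N.isInternal.chooseDecomposition

/-- Degree-`q` projection, as an `R`-linear map. -/
noncomputable def projN (N : PersMod P R) (q : P) : N.carrier →ₗ[R] N.carrier :=
  (N.deg q).subtype ∘ₗ (DFinsupp.lapply q) ∘ₗ (DirectSum.decomposeLinearEquiv N.deg).toLinearMap

theorem projN_apply (N : PersMod P R) (q : P) (x : N.carrier) :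
    projN N q x = (DirectSum.decompose N.deg x q : N.carrier) := rfl

theorem projN_mem (N : PersMod P R) (q : P) (x : N.carrier) : projN N q x ∈ N.deg q :=
  (DirectSum.decompose N.deg x q).2

theorem projN_same {N : PersMod P R} {q : P} {x : N.carrier} (hx : x ∈ N.deg q) :
    projN N q x = x := DirectSum.decompose_of_mem_same N.deg hx

theorem projN_ne {N : PersMod P R} {p q : P} {x : N.carrier} (hx : x ∈ N.deg p) (h : p ≠ q) :
    projN N q x = 0 := DirectSum.decompose_of_mem_ne N.deg hx h

theorem exists_sum_projN (N : PersMod P R) (x : N.carrier) :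
    ∃ D : Finset P, x = ∑ r ∈ D, projN N r x := by
  classical
  refine ⟨(DirectSum.decompose N.deg x).support, ?_⟩
  conv_lhs => rw [← DirectSum.sum_support_decompose N.deg x]
  rfl

theorem smul_expand {N : PersMod P R} (a : PersAlg P R) (x : N.carrier) :
    a • x = ∑ s ∈ a.coeff.support, a.coeff s • tp P R s.1 • x := by
  conv_lhs => rw [← AddMonoidAlgebra.sum_coeff_single a]
  rw [Finsupp.sum, Finset.sum_smul]
  refine Finset.sum_congr rfl fun s _ => ?_
  have h1 : (AddMonoidAlgebra.single s (a.coeff s) : PersAlg P R) = a.coeff s • tp P R s.1 := by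
    rw [tp_of_nonneg s.2]
    rw [show (⟨(s : P), s.2⟩ : ↥(AddSubmonoid.nonneg P)) = s from rfl]
    rw [AddMonoidAlgebra.smul_single, smul_eq_mul, mul_one]
  rw [h1, smul_assoc]

section Free

variable {F : PersMod P R} {Λ : Type} [DecidableEq Λ] {dl : Λ → P}
variable (b : Module.Basis Λ (PersAlg P R) F.carrier)
variable (hbdeg : ∀ η, b η ∈ F.deg (dl η))

include hbdeg

theorem deg_le_span (q : P) :
    F.deg q ≤ Submodule.span R
      {z : F.carrier | ∃ η : Λ, dl η ≤ q ∧ z = tp P R (q - dl η) • b η} := by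
  intro x hx
  have hx2 : x = ∑ η ∈ (b.repr x).support, ∑ s ∈ (b.repr x η).coeff.support,
      (b.repr x η).coeff s • tp P R s.1 • b η := by
    conv_lhs => rw [← b.linearCombination_repr x]
    rw [Finsupp.linearCombination_apply, Finsupp.sum]
    exact Finset.sum_congr rfl fun η _ => smul_expand _ _
  have hproj : x = ∑ η ∈ (b.repr x).support, ∑ s ∈ (b.repr x η).coeff.support,
      (b.repr x η).coeff s • projN F q (tp P R s.1 • b η) := by
    conv_lhs => rw [← projN_same hx]
    conv_lhs => rw [hx2]
    rw [map_sum]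
    refine Finset.sum_congr rfl fun η _ => ?_
    rw [map_sum]
    refine Finset.sum_congr rfl fun s _ => ?_
    rw [LinearMap.map_smul]
  rw [hproj]
  refine Submodule.sum_mem _ fun η _ => Submodule.sum_mem _ fun s _ => ?_
  have hmem := F.tp_smul_mem s.1 s.2 (dl η) (b η) (hbdeg η)
  by_cases hqs : dl η + s.1 = q
  · rw [hqs] at hmem
    rw [projN_same hmem]
    refine Submodule.smul_mem _ _ (Submodule.subset_span ?_)
    have hsq : q - dl η = s.1 := by rw [← hqs]; exact add_sub_cancel_left _ _
    exact ⟨η, sub_nonneg.mp (hsq ▸ s.2), by rw [hsq]⟩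
  · rw [projN_ne hmem hqs, smul_zero]
    exact Submodule.zero_mem _

/-- Coordinates of a homogeneous element are scalar multiples of the appropriate monomial. -/
theorem repr_homog {q : P} {x : F.carrier} (hx : x ∈ F.deg q) (η : Λ) :
    ∃ c : R, b.repr x η = c • tp P R (q - dl η) := by
  refine Submodule.span_induction ?_ ?_ ?_ ?_ (deg_le_span b hbdeg q hx)
  · rintro z ⟨η', h', rfl⟩
    rw [LinearEquiv.map_smul, Module.Basis.repr_self]
    by_cases hη : η' = η
    · subst hη
      refine ⟨1, ?_⟩
      rw [Finsupp.smul_single, smul_eq_mul, mul_one, Finsupp.single_eq_same, one_smul]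
    · refine ⟨0, ?_⟩
      rw [Finsupp.smul_single, smul_eq_mul, mul_one, Finsupp.single_eq_of_ne' hη, zero_smul]
  · exact ⟨0, by rw [map_zero, Finsupp.zero_apply, zero_smul]⟩
  · rintro z w hz hw ⟨c, hc⟩ ⟨c', hc'⟩
    exact ⟨c + c', by rw [map_add, Finsupp.add_apply, hc, hc', add_smul]⟩
  · rintro r z hz ⟨c, hc⟩
    refine ⟨r * c, ?_⟩
    have : b.repr (r • z) = r • b.repr z := by
      rw [← IsScalarTower.algebraMap_smul (PersAlg P R) r z, LinearEquiv.map_smul,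
        IsScalarTower.algebraMap_smul]
    rw [this, Finsupp.smul_apply, hc, smul_smul]

theorem supp_deg {q : P} {x : F.carrier} (hx : x ∈ F.deg q) {η : Λ}
    (hne : b.repr x η ≠ 0) : dl η ≤ q := by
  by_contra hc
  obtain ⟨c, hcr⟩ := repr_homog b hbdeg hx η
  rw [tp_of_neg (fun h0 => hc (sub_nonneg.mp h0)), smul_zero] at hcr
  exact hne hcr

/-- A homogeneous element of degree `ρ` whose coordinates all have degrees `≤ c` is divisible
by `t^{ρ - c}`. -/
theorem deg_factor {ρ c : P} (hc : c ≤ ρ) {x : F.carrier} (hx : x ∈ F.deg ρ)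
    (hsupp : ∀ η, b.repr x η ≠ 0 → dl η ≤ c) :
    ∃ f ∈ F.deg c, tp P R (ρ - c) • f = x := by
  classical
  have hch : ∀ η : Λ, ∃ cc : R, b.repr x η = cc • tp P R (ρ - dl η) :=
    fun η => repr_homog b hbdeg hx η
  choose co hco using hch
  refine ⟨∑ η ∈ (b.repr x).support, co η • tp P R (c - dl η) • b η, ?_, ?_⟩
  · refine Submodule.sum_mem _ fun η hη => Submodule.smul_mem _ _ ?_
    have hm := F.tp_smul_mem (c - dl η) (sub_nonneg.mpr (hsupp η (Finsupp.mem_support_iff.mp hη)))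
      (dl η) (b η) (hbdeg η)
    rwa [add_sub_cancel] at hm
  · rw [Finset.smul_sum]
    conv_rhs => rw [← b.linearCombination_repr x]
    rw [Finsupp.linearCombination_apply, Finsupp.sum]
    refine Finset.sum_congr rfl fun η hη => ?_
    have hd : dl η ≤ c := hsupp η (Finsupp.mem_support_iff.mp hη)
    rw [hco η]
    rw [smul_comm (tp P R (ρ - c)) (co η), smul_smul (tp P R (ρ - c)),
      tp_mul_s13 (sub_nonneg.mpr hc) (sub_nonneg.mpr hd), sub_add_sub_cancel, smul_assoc]

/-- Truncating a homogeneous element to a set of coordinates. -/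
theorem trunc_mem {ρ : P} {x : F.carrier} (hx : x ∈ F.deg ρ) (s : Finset Λ) :
    ∑ η ∈ s, b.repr x η • b η ∈ F.deg ρ := by
  refine Submodule.sum_mem _ fun η hη => ?_
  by_cases h0 : b.repr x η = 0
  · rw [h0, zero_smul]; exact Submodule.zero_mem _
  · obtain ⟨c, hc⟩ := repr_homog b hbdeg hx η
    rw [hc, smul_assoc]
    refine Submodule.smul_mem _ _ ?_
    have hm := F.tp_smul_mem (ρ - dl η) (sub_nonneg.mpr (supp_deg b hbdeg hx h0))
      (dl η) (b η) (hbdeg η)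
    rwa [add_sub_cancel] at hm

omit hbdeg in
theorem trunc_repr {x : F.carrier} (s : Finset Λ) (η : Λ) :
    b.repr (∑ η' ∈ s, b.repr x η' • b η') η = if η ∈ s then b.repr x η else 0 := by
  classical
  rw [map_sum]
  have h1 : ∀ η' : Λ, b.repr (b.repr x η' • b η') = Finsupp.single η' (b.repr x η') := by
    intro η'
    rw [LinearEquiv.map_smul, Module.Basis.repr_self, Finsupp.smul_single, smul_eq_mul, mul_one]
  rw [Finset.sum_congr rfl fun η' _ => h1 η']
  rw [Finset.sum_apply']
  rw [Finset.sum_congr rfl fun η' _ => Finsupp.single_apply (a := η') (b := b.repr x η') (a' := η)]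
  rw [Finset.sum_ite_eq' s η (fun η' => b.repr x η')]

end Free

section Main

variable {M F : PersMod P R} {Λ : Type} [DecidableEq Λ] {dl : Λ → P}
variable (b : Module.Basis Λ (PersAlg P R) F.carrier)
variable (im : M.carrier →ₗ[PersAlg P R] F.carrier) (pm : F.carrier →ₗ[PersAlg P R] M.carrier)
variable (hbdeg : ∀ η, b η ∈ F.deg (dl η))
variable (him : ∀ (a : P), ∀ x ∈ M.deg a, im x ∈ F.deg a)
variable (hpm : ∀ (a : P), ∀ x ∈ F.deg a, pm x ∈ M.deg a)
variable (hpi : ∀ x, pm (im x) = x)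

theorem smulMapR_apply (N : PersMod P R) (a : PersAlg P R) (x : N.carrier) :
    smulMapR P R N a x = a • x := rfl

theorem V_le_deg {M : PersMod P R} {r q : P} (hq : q ≤ r) :
    Submodule.map (smulMapR P R M (tp P R (r - q))) (M.deg q) ≤ M.deg r := by
  rintro x ⟨w, hw, rfl⟩
  rw [smulMapR_apply]
  have := M.tp_smul_mem (r - q) (sub_nonneg.mpr hq) q w hw
  rwa [add_sub_cancel] at this

theorem mem_Dsub_of {M : PersMod P R} {c q : P} (h : c < q) {w : M.carrier}
    (hw : w ∈ M.deg c) : tp P R (q - c) • w ∈ Dsub P R M q :=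
  Submodule.mem_iSup_of_mem ⟨c, h⟩ ⟨w, hw, rfl⟩

include b im pm hbdeg him hpm hpi

theorem supp_V {r q : P} {v : M.carrier}
    (hv : v ∈ Submodule.map (smulMapR P R M (tp P R (r - q))) (M.deg q)) {η : Λ}
    (hne : b.repr (im v) η ≠ 0) : dl η ≤ q := by
  obtain ⟨w, hw, rfl⟩ := hv
  rw [smulMapR_apply, map_smul] at hne
  have h2 : b.repr (tp P R (r - q) • im w) η = tp P R (r - q) * b.repr (im w) η := by
    rw [LinearEquiv.map_smul, Finsupp.smul_apply, smul_eq_mul]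
  rw [h2] at hne
  exact supp_deg b hbdeg (him q w hw) fun h0 => hne (by rw [h0, mul_zero])

theorem mem_V_of_supp {r q : P} (hq : q ≤ r) {u : M.carrier} (hu : u ∈ M.deg r)
    (hs : ∀ η, b.repr (im u) η ≠ 0 → dl η ≤ q) :
    u ∈ Submodule.map (smulMapR P R M (tp P R (r - q))) (M.deg q) := by
  obtain ⟨f, hf, hfe⟩ := deg_factor b hbdeg hq (him r u hu) hs
  refine ⟨pm f, hpm _ _ hf, ?_⟩
  rw [smulMapR_apply, ← map_smul, hfe, hpi]

theorem smul_cancelM {s : P} (hs : 0 ≤ s) {x y : M.carrier}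
    (h : tp P R s • x = tp P R s • y) : x = y := by
  have h2 : tp P R s • im x = tp P R s • im y := by rw [← map_smul, h, map_smul]
  have h3 : im x = im y := by
    apply b.repr.injective
    refine Finsupp.ext fun η => ?_
    have h4 : tp P R s * b.repr (im x) η = tp P R s * b.repr (im y) η := by
      have e1 : b.repr (tp P R s • im x) η = tp P R s * b.repr (im x) η := by
        rw [LinearEquiv.map_smul, Finsupp.smul_apply, smul_eq_mul]
      have e2 : b.repr (tp P R s • im y) η = tp P R s * b.repr (im y) η := by
        rw [LinearEquiv.map_smul, Finsupp.smul_apply, smul_eq_mul]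
      rw [← e1, ← e2, h2]
    exact tp_mul_cancel hs h4
  rw [← hpi x, h3, hpi]

theorem max_term_in_D {r : P} {G : Finset P} (hGr : ∀ q ∈ G, q ≤ r)
    {q₀ : P} (hq₀r : q₀ ≤ r) (hmax : ∀ q ∈ G, ¬ q₀ ≤ q)
    {w : P → M.carrier} (hw : ∀ q, w q ∈ M.deg q)
    (hrel : tp P R (r - q₀) • w q₀ + ∑ q ∈ G, tp P R (r - q) • w q = 0) :
    w q₀ ∈ Dsub P R M q₀ := by
  classical
  set v : P → M.carrier := fun q => tp P R (r - q) • w q with hv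
  have hvV : ∀ q : P, v q ∈ Submodule.map (smulMapR P R M (tp P R (r - q))) (M.deg q) :=
    fun q => ⟨w q, hw q, rfl⟩
  have hvdeg : ∀ q, q ≤ r → v q ∈ M.deg r := fun q hq => V_le_deg hq (hvV q)
  set xq : P → F.carrier := fun q =>
    ∑ η ∈ (b.repr (im (v q))).support.filter (fun η => dl η ≤ q₀),
      b.repr (im (v q)) η • b η with hxq
  have hxqmem : ∀ q ∈ G, ∃ u ∈ Dsub P R M q₀, pm (xq q) = tp P R (r - q₀) • u := by
    intro q hq
    have hqr := hGr q hq
    have hcle : q₀ ⊓ q ≤ r := le_trans inf_le_right hqr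
    have hlt : q₀ ⊓ q < q₀ :=
      lt_of_le_of_ne inf_le_left (fun hgood => hmax q hq (inf_eq_left.mp hgood))
    have hsupc : ∀ η, b.repr (∑ η' ∈ (b.repr (im (v q))).support.filter
        (fun η' => dl η' ≤ q₀), b.repr (im (v q)) η' • b η') η ≠ 0 → dl η ≤ q₀ ⊓ q := by
      intro η hne
      rw [trunc_repr] at hne
      split_ifs at hne with hcme
      · obtain ⟨hsup, hle⟩ := Finset.mem_filter.mp hcme
        exact le_inf hle (supp_V b im pm hbdeg him hpm hpi (hvV q) hne)
      · exact absurd rfl hne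
    obtain ⟨f, hf, hfe⟩ := deg_factor b hbdeg hcle
      (trunc_mem b hbdeg (him r _ (hvdeg q hqr)) _) hsupc
    refine ⟨tp P R (q₀ - q₀ ⊓ q) • pm f, mem_Dsub_of hlt (hpm _ _ hf), ?_⟩
    have hpmx : pm (xq q) = tp P R (r - q₀ ⊓ q) • pm f := by
      rw [hxq]
      simp only
      rw [← hfe, map_smul]
    rw [hpmx, smul_smul, tp_mul_s13 (sub_nonneg.mpr hq₀r) (sub_nonneg.mpr hlt.le),
      sub_add_sub_cancel]
  choose uu huD huE using hxqmem
  have hkey : im (v q₀) + ∑ q ∈ G, xq q = 0 := by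
    apply b.repr.injective
    rw [map_zero, map_add, map_sum]
    refine Finsupp.ext fun η => ?_
    rw [Finsupp.add_apply, Finset.sum_apply', Finsupp.zero_apply]
    by_cases hdq : dl η ≤ q₀
    · have hx : ∀ q ∈ G, b.repr (xq q) η = b.repr (im (v q)) η := by
        intro q hq
        rw [hxq]
        simp only
        rw [trunc_repr]
        split_ifs with hcme
        · rfl
        · by_cases hsup : η ∈ (b.repr (im (v q))).support
          · exact absurd (Finset.mem_filter.mpr ⟨hsup, hdq⟩) hcme
          · rw [Finsupp.notMem_support_iff.mp hsup]
      rw [Finset.sum_congr rfl hx]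
      have hzero : v q₀ + ∑ q ∈ G, v q = 0 := hrel
      have hthis : b.repr (im (v q₀ + ∑ q ∈ G, v q)) η = 0 := by
        rw [hzero, map_zero, map_zero]
        rfl
      rw [map_add, map_sum, map_add, map_sum, Finsupp.add_apply, Finset.sum_apply'] at hthis
      exact hthis
    · have h1 : b.repr (im (v q₀)) η = 0 := by
        by_contra hne
        exact hdq (supp_V b im pm hbdeg him hpm hpi (hvV q₀) hne)
      have h2 : ∀ q ∈ G, b.repr (xq q) η = 0 := by
        intro q hq
        rw [hxq]
        simp only
        rw [trunc_repr]
        split_ifs with hcme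
        · exact absurd (Finset.mem_filter.mp hcme).2 hdq
        · rfl
      rw [h1, Finset.sum_congr rfl h2, Finset.sum_const_zero, add_zero]
  have hpm2 : v q₀ + ∑ q ∈ G, pm (xq q) = 0 := by
    have h5 := congrArg pm hkey
    rwa [map_zero, map_add, map_sum, hpi] at h5
  have hsum : ∑ q ∈ G, pm (xq q) = tp P R (r - q₀) • ∑ q ∈ G.attach, uu q.1 q.2 := by
    rw [Finset.smul_sum, ← Finset.sum_attach G (fun q => pm (xq q))]
    exact Finset.sum_congr rfl fun q _ => huE q.1 q.2
  have hU : ∑ q ∈ G.attach, uu q.1 q.2 ∈ Dsub P R M q₀ :=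
    Submodule.sum_mem _ fun q _ => huD q.1 q.2
  have hwq : w q₀ = -∑ q ∈ G.attach, uu q.1 q.2 := by
    apply smul_cancelM b im pm hbdeg him hpm hpi (sub_nonneg.mpr hq₀r)
    rw [smul_neg, ← hsum]
    rw [eq_neg_iff_add_eq_zero]
    exact hpm2
  rw [hwq]
  exact Submodule.neg_mem _ hU

end Main

section Coeff

variable {M F : PersMod P R} {Λ : Type} [DecidableEq Λ] {dl : Λ → P}
variable (b : Module.Basis Λ (PersAlg P R) F.carrier)
variable (im : M.carrier →ₗ[PersAlg P R] F.carrier) (pm : F.carrier →ₗ[PersAlg P R] M.carrier)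
variable (hbdeg : ∀ η, b η ∈ F.deg (dl η))
variable (him : ∀ (a : P), ∀ x ∈ M.deg a, im x ∈ F.deg a)
variable (hpm : ∀ (a : P), ∀ x ∈ F.deg a, pm x ∈ M.deg a)
variable (hpi : ∀ x, pm (im x) = x)
variable {n : P → ℕ} {e : (r : P) → Fin (n r) → M.carrier}
variable (hdeg : ∀ r j, e r j ∈ M.deg r)
variable (hli : ∀ r, LinearIndependent R (fun j => (Dsub P R M r).mkQ (e r j)))

include hli in
theorem li_coeff (r : P) (g : Fin (n r) → R)
    (h : ∑ j, g j • e r j ∈ Dsub P R M r) : ∀ j, g j = 0 := by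
  have h0 : ∑ j, g j • (Dsub P R M r).mkQ (e r j) = 0 := by
    have h1 : (Dsub P R M r).mkQ (∑ j, g j • e r j) = 0 := by
      rw [Submodule.mkQ_apply, Submodule.Quotient.mk_eq_zero]
      exact h
    rw [map_sum] at h1
    simpa [map_smul] using h1
  exact Fintype.linearIndependent_iff.mp (hli r) g h0

include b im pm hbdeg him hpm hpi hdeg hli

theorem coeff_zero (r : P) (k : ℕ) :
    ∀ (G : Finset P), G.card ≤ k → (∀ q ∈ G, q ≤ r) →
    ∀ (a : (q : P) → Fin (n q) → R),
      (∑ q ∈ G, tp P R (r - q) • (∑ j, a q j • e q j) = 0) →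
      ∀ q ∈ G, ∀ j, a q j = 0 := by
  classical
  induction k with
  | zero =>
    intro G hcard _ a _ q hq
    rw [Finset.card_eq_zero.mp (Nat.le_zero.mp hcard)] at hq
    exact absurd hq (Finset.notMem_empty q)
  | succ k ih =>
    intro G hcard hGr a hrel q hq j
    obtain ⟨q₀, hq₀G, hq₀max⟩ := Set.Finite.exists_maximalFor id (↑G : Set P)
      (G.finite_toSet) ⟨q, hq⟩
    simp only [id_eq] at hq₀max
    have hq₀G' : q₀ ∈ G := hq₀G
    have hmax' : ∀ p ∈ G.erase q₀, ¬ q₀ ≤ p := by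
      intro p hp hle
      obtain ⟨hne, hpG⟩ := Finset.mem_erase.mp hp
      exact hne (le_antisymm (hq₀max hpG hle) hle)
    have hrel' : tp P R (r - q₀) • (∑ j, a q₀ j • e q₀ j) +
        ∑ p ∈ G.erase q₀, tp P R (r - p) • (∑ j, a p j • e p j) = 0 := by
      rw [← Finset.add_sum_erase G (fun p => tp P R (r - p) • (∑ j, a p j • e p j)) hq₀G']
        at hrel
      exact hrel
    have hwdeg : ∀ p : P, (∑ j, a p j • e p j) ∈ M.deg p := fun p =>
      Submodule.sum_mem _ fun j _ => Submodule.smul_mem _ _ (hdeg p j)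
    have hD : (∑ j, a q₀ j • e q₀ j) ∈ Dsub P R M q₀ :=
      max_term_in_D b im pm hbdeg him hpm hpi
        (fun p hp => hGr p (Finset.mem_erase.mp hp).2) (hGr q₀ hq₀G') hmax'
        (w := fun p => ∑ j, a p j • e p j) hwdeg hrel'
    have hz : ∀ j, a q₀ j = 0 := li_coeff hli q₀ (a q₀) hD
    by_cases hqq : q = q₀
    · subst hqq; exact hz j
    · have hrel'' : ∑ p ∈ G.erase q₀, tp P R (r - p) • (∑ j, a p j • e p j) = 0 := by
        have : tp P R (r - q₀) • (∑ j, a q₀ j • e q₀ j) = 0 := by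
          have hzz : (∑ j, a q₀ j • e q₀ j) = 0 := by
            refine Finset.sum_eq_zero fun j _ => ?_
            rw [hz j, zero_smul]
          rw [hzz, smul_zero]
        rw [this, zero_add] at hrel'
        exact hrel'
      refine ih (G.erase q₀) ?_ (fun p hp => hGr p (Finset.mem_erase.mp hp).2) a hrel'' q
        (Finset.mem_erase.mpr ⟨hqq, hq⟩) j
      have := Finset.card_erase_of_mem hq₀G'
      omega

end Coeff
section Surj

variable {M F : PersMod P R} {Λ : Type} [DecidableEq Λ] {dl : Λ → P}
variable (b : Module.Basis Λ (PersAlg P R) F.carrier)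
variable (im : M.carrier →ₗ[PersAlg P R] F.carrier) (pm : F.carrier →ₗ[PersAlg P R] M.carrier)
variable (hbdeg : ∀ η, b η ∈ F.deg (dl η))
variable (him : ∀ (a : P), ∀ x ∈ M.deg a, im x ∈ F.deg a)
variable (hpm : ∀ (a : P), ∀ x ∈ F.deg a, pm x ∈ M.deg a)
variable (hpi : ∀ x, pm (im x) = x)
variable {n : P → ℕ} {e : (r : P) → Fin (n r) → M.carrier}
variable (hspan : ∀ r, Submodule.span R (Set.range fun j => (Dsub P R M r).mkQ (e r j)) =
      Submodule.map (Dsub P R M r).mkQ (M.deg r))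
variable (hFG : ∀ a : P, (M.deg a).FG)

include b im pm hbdeg him hpm hpi hspan hFG

theorem deg_le_spanE (r : P) :
    M.deg r ≤ Submodule.restrictScalars R (Submodule.span (PersAlg P R)
      (Set.range (fun p : Σ r : P, Fin (n r) => e p.1 p.2))) := by
  classical
  set NE : Submodule R M.carrier := Submodule.restrictScalars R (Submodule.span (PersAlg P R)
      (Set.range (fun p : Σ r : P, Fin (n r) => e p.1 p.2))) with hNE
  have hNsmul : ∀ (s : P) (x : M.carrier), x ∈ NE → tp P R s • x ∈ NE := by
    intro s x hx
    rw [hNE, Submodule.restrictScalars_mem] at hx ⊢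
    exact Submodule.smul_mem _ _ hx
  have heN : ∀ (q : P) (j : Fin (n q)), e q j ∈ NE := by
    intro q j
    rw [hNE, Submodule.restrictScalars_mem]
    exact Submodule.subset_span ⟨⟨q, j⟩, rfl⟩
  obtain ⟨S, hS⟩ := hFG r
  set T : Finset Λ := S.biUnion (fun g => (b.repr (im g)).support) with hT
  have hTb : ∀ y ∈ M.deg r, ∀ η : Λ, b.repr (im y) η ≠ 0 → η ∈ T := by
    intro y hy
    rw [← hS] at hy
    refine Submodule.span_induction ?_ ?_ ?_ ?_ hy
    · intro g hg η hne
      exact Finset.mem_biUnion.mpr ⟨g, hg, Finsupp.mem_support_iff.mpr hne⟩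
    · intro η hne
      exact absurd (by simp : (b.repr (im (0 : M.carrier))) η = 0) hne
    · intro x y _ _ hx hy η hne
      rw [map_add, map_add, Finsupp.add_apply] at hne
      by_cases h1 : b.repr (im x) η = 0
      · refine hy η fun h2 => hne ?_
        rw [h1, h2, add_zero]
      · exact hx η h1
    · intro c x _ hx η hne
      refine hx η fun h0 => hne ?_
      rw [← IsScalarTower.algebraMap_smul (PersAlg P R) c x, map_smul, LinearEquiv.map_smul,
        Finsupp.smul_apply, h0, smul_zero]
  set J : Finset P := T.powerset.image
      (fun U => if h : U.Nonempty then U.sup' h dl else r) with hJ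
  have main : ∀ (k : ℕ) (c : P), c ≤ r → ((J.filter (fun z => z < c)).card ≤ k) →
      ∀ u ∈ Submodule.map (smulMapR P R M (tp P R (r - c))) (M.deg c), u ∈ NE := by
    intro k
    induction k using Nat.strong_induction_on with
    | _ k ihk =>
    intro c hcr hcard u hu
    obtain ⟨y, hy, rfl⟩ := hu
    have h1 : (Dsub P R M c).mkQ y ∈
        Submodule.span R (Set.range fun j => (Dsub P R M c).mkQ (e c j)) := by
      rw [hspan c]
      exact Submodule.mem_map_of_mem hy
    obtain ⟨g, hg⟩ := (Submodule.mem_span_range_iff_exists_fun R).mp h1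
    have hD : y - ∑ j, g j • e c j ∈ Dsub P R M c := by
      rw [← Submodule.ker_mkQ (Dsub P R M c), LinearMap.mem_ker, map_sub, map_sum]
      simp only [map_smul]
      rw [hg, sub_self]
    have hsplit : tp P R (r - c) • y =
        tp P R (r - c) • (∑ j, g j • e c j) + tp P R (r - c) • (y - ∑ j, g j • e c j) := by
      rw [← smul_add, add_sub_cancel]
    rw [smulMapR_apply, hsplit]
    refine Submodule.add_mem _ ?_ ?_
    · rw [Finset.smul_sum]
      refine Submodule.sum_mem _ fun j _ => ?_
      exact hNsmul _ _ (Submodule.smul_mem _ _ (heN c j))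
    · have hD' : y - ∑ j, g j • e c j ∈
          ⨆ q : {q : P // q < c}, Submodule.map (smulMapR P R M (tp P R (c - q.1)))
            (M.deg q.1) := hD
      refine Submodule.iSup_induction
        (motive := fun z => tp P R (r - c) • z ∈ NE) _ hD' ?_ ?_ ?_
      · rintro ⟨p, hpc⟩ z ⟨w, hwdeg, rfl⟩
        rw [smulMapR_apply, smul_smul, tp_mul_s13 (sub_nonneg.mpr hcr) (sub_nonneg.mpr hpc.le),
          sub_add_sub_cancel]
        by_cases hz : tp P R (r - p) • w = 0
        · rw [hz]; exact Submodule.zero_mem _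
        have hpr : p ≤ r := le_trans hpc.le hcr
        have hu'V : tp P R (r - p) • w ∈
            Submodule.map (smulMapR P R M (tp P R (r - p))) (M.deg p) := ⟨w, hwdeg, rfl⟩
        have hu'deg : tp P R (r - p) • w ∈ M.deg r := V_le_deg hpr hu'V
        have hsne : ((b.repr (im (tp P R (r - p) • w))).support).Nonempty := by
          rw [Finsupp.support_nonempty_iff]
          intro h0
          refine hz ?_
          rw [← hpi (tp P R (r - p) • w), (b.repr.map_eq_zero_iff).mp h0, map_zero]
        set δ := ((b.repr (im (tp P R (r - p) • w))).support).sup' hsne dl with hδ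
        have hδp : δ ≤ p := Finset.sup'_le _ _ fun η hη =>
          supp_V b im pm hbdeg him hpm hpi hu'V (Finsupp.mem_support_iff.mp hη)
        have hδr : δ ≤ r := le_trans hδp hpr
        have hVδ := mem_V_of_supp b im pm hbdeg him hpm hpi hδr hu'deg
          (fun η hne => Finset.le_sup' dl (Finsupp.mem_support_iff.mpr hne))
        have hδJ : δ ∈ J := by
          rw [hJ]
          refine Finset.mem_image.mpr ⟨_, Finset.mem_powerset.mpr ?_, dif_pos hsne⟩
          intro η hη
          exact hTb _ hu'deg η (Finsupp.mem_support_iff.mp hη)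
        have hclt : (J.filter (fun z => z < δ)).card < (J.filter (fun z => z < c)).card := by
          refine Finset.card_lt_card ⟨?_, ?_⟩
          · intro z hzf
            obtain ⟨hzJ, hzδ⟩ := Finset.mem_filter.mp hzf
            exact Finset.mem_filter.mpr ⟨hzJ, lt_trans hzδ (lt_of_le_of_lt hδp hpc)⟩
          · intro hsub
            have hmem : δ ∈ J.filter (fun z => z < c) :=
              Finset.mem_filter.mpr ⟨hδJ, lt_of_le_of_lt hδp hpc⟩
            have hx2 := Finset.mem_filter.mp (hsub hmem)
            exact lt_irrefl δ hx2.2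
        exact ihk _ (lt_of_lt_of_le hclt hcard) δ hδr le_rfl _ hVδ
      · show tp P R (r - c) • (0 : M.carrier) ∈ NE
        rw [smul_zero]; exact Submodule.zero_mem _
      · intro z₁ z₂ hz1 hz2
        show tp P R (r - c) • (z₁ + z₂) ∈ NE
        rw [smul_add]
        exact Submodule.add_mem _ hz1 hz2
  intro x hx
  refine main ((J.filter (fun z => z < r)).card) r le_rfl le_rfl x ⟨x, hx, ?_⟩
  rw [smulMapR_apply, sub_self, tp_zero, one_smul]

end Surj

end Aux

theorem indecomposables_form_basis [IsDomain R] [IsPrincipalIdealRing R]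
    (M : PersMod P R) (hproj : IsGradedProjective P R M) (hFG : ∀ a : P, (M.deg a).FG)
    (n : P → ℕ) (e : (r : P) → Fin (n r) → M.carrier)
    (hdeg : ∀ r j, e r j ∈ M.deg r)
    (hli : ∀ r, LinearIndependent R (fun j => (Dsub P R M r).mkQ (e r j)))
    (hspan : ∀ r, Submodule.span R (Set.range fun j => (Dsub P R M r).mkQ (e r j)) =
      Submodule.map (Dsub P R M r).mkQ (M.deg r)) :
    (LinearIndependent (PersAlg P R) (fun p : Σ r : P, Fin (n r) => e p.1 p.2) ∧
      Submodule.span (PersAlg P R) (Set.range (fun p : Σ r : P, Fin (n r) => e p.1 p.2)) = ⊤) ∧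
    IsGradedFree P R M := by
  classical
  obtain ⟨F, hFfree, im, pm, him, hpm, hpi0⟩ := hproj
  obtain ⟨Λ, dl, b, hbdeg⟩ := hFfree
  letI : DecidableEq Λ := Classical.decEq Λ
  have hpi : ∀ x, pm (im x) = x := fun x => by
    have h := LinearMap.ext_iff.mp hpi0 x
    simpa using h
  -- spanning
  have hspanT : Submodule.span (PersAlg P R)
      (Set.range (fun p : Σ r : P, Fin (n r) => e p.1 p.2)) = ⊤ := by
    rw [eq_top_iff]
    intro x _
    obtain ⟨D, hDx⟩ := exists_sum_projN M x
    have hmem : x ∈ Submodule.restrictScalars R (Submodule.span (PersAlg P R)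
        (Set.range (fun p : Σ r : P, Fin (n r) => e p.1 p.2))) := by
      rw [hDx]
      exact Submodule.sum_mem _ fun r' _ =>
        deg_le_spanE b im pm hbdeg him hpm hpi hspan hFG r' (projN_mem M r' x)
    exact (Submodule.restrictScalars_mem _ _ _).mp hmem
  -- linear independence
  have hliT : LinearIndependent (PersAlg P R)
      (fun p : Σ r : P, Fin (n r) => e p.1 p.2) := by
    rw [linearIndependent_iff]
    intro l hl
    have hps : ∀ (p0 : Σ r : P, Fin (n r)) (s0 : ↥(AddSubmonoid.nonneg P)), (l p0).coeff s0 = 0 := by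
      intro p0 s0
      by_contra hne0
      set r : P := p0.1 + s0.1 with hr
      set ap : (q : P) → Fin (n q) → R := fun q j =>
        if h : (0 : P) ≤ r - q then (l ⟨q, j⟩).coeff ⟨r - q, h⟩ else 0 with hap
      have hexp : (0 : M.carrier) = ∑ p ∈ l.support, ∑ s ∈ (l p).coeff.support,
          (l p).coeff s • tp P R s.1 • e p.1 p.2 := by
        have hl' : ∑ p ∈ l.support, l p • e p.1 p.2 = 0 := by
          rw [Finsupp.linearCombination_apply, Finsupp.sum] at hl
          exact hl
        rw [← hl']
        exact Finset.sum_congr rfl fun p _ => smul_expand (l p) _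
      have hproj1 : (0 : M.carrier) = ∑ p ∈ l.support, ∑ s ∈ (l p).coeff.support,
          (l p).coeff s • projN M r (tp P R s.1 • e p.1 p.2) := by
        have h2 := congrArg (projN M r) hexp
        rw [map_zero, map_sum] at h2
        rw [h2]
        refine Finset.sum_congr rfl fun p _ => ?_
        rw [map_sum]
        exact Finset.sum_congr rfl fun s _ => by rw [LinearMap.map_smul]
      have hterm : ∀ (p : Σ r : P, Fin (n r)), ∀ s ∈ (l p).coeff.support,
          (l p).coeff s • projN M r (tp P R s.1 • e p.1 p.2) =
          (if p.1 + s.1 = r then (l p).coeff s • tp P R s.1 • e p.1 p.2 else 0) := by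
        intro p s _
        have hmem := M.tp_smul_mem s.1 s.2 p.1 (e p.1 p.2) (hdeg p.1 p.2)
        by_cases hc : p.1 + s.1 = r
        · rw [if_pos hc, ← hc, projN_same hmem]
        · rw [if_neg hc, projN_ne hmem hc, smul_zero]
      have hinner : ∀ p : Σ r : P, Fin (n r), p ∈ l.support →
          ∑ s ∈ (l p).coeff.support,
            (if p.1 + s.1 = r then (l p).coeff s • tp P R s.1 • e p.1 p.2 else 0) =
          ap p.1 p.2 • tp P R (r - p.1) • e p.1 p.2 := by
        intro p _
        by_cases hpos : (0 : P) ≤ r - p.1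
        · set s₀ : ↥(AddSubmonoid.nonneg P) := ⟨r - p.1, hpos⟩ with hs₀
          have hcond : ∀ s : ↥(AddSubmonoid.nonneg P), (p.1 + s.1 = r) ↔ s = s₀ := by
            intro s
            constructor
            · intro h
              refine Subtype.ext ?_
              show s.1 = r - p.1
              rw [← h]
              exact (add_sub_cancel_left _ _).symm
            · intro h
              rw [h]
              show p.1 + (r - p.1) = r
              abel
          have hstep : ∀ s ∈ (l p).coeff.support,
              (if p.1 + s.1 = r then (l p).coeff s • tp P R s.1 • e p.1 p.2 else 0) =
              (if s = s₀ then (l p).coeff s • tp P R s.1 • e p.1 p.2 else 0) :=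
            fun s _ => if_congr (hcond s) rfl rfl
          rw [Finset.sum_congr rfl hstep, Finset.sum_ite_eq' (l p).coeff.support s₀
            (fun s => (l p).coeff s • tp P R s.1 • e p.1 p.2)]
          have hapv : ap p.1 p.2 = (l p).coeff s₀ := by
            rw [hap]
            simp only
            rw [dif_pos hpos]
          by_cases hin : s₀ ∈ (l p).coeff.support
          · rw [if_pos hin, hapv]
          · rw [if_neg hin, hapv, Finsupp.notMem_support_iff.mp hin, zero_smul]
        · have hall : ∀ s ∈ (l p).coeff.support,
              (if p.1 + s.1 = r then (l p).coeff s • tp P R s.1 • e p.1 p.2 else 0) = 0 := by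
            intro s _
            rw [if_neg]
            intro h
            refine hpos ?_
            have h3 : r - p.1 = s.1 := by rw [← h]; exact add_sub_cancel_left _ _
            rw [h3]
            exact s.2
          rw [Finset.sum_congr rfl hall, Finset.sum_const_zero, hap]
          simp only
          rw [dif_neg hpos, zero_smul]
      have hproj3 : (0 : M.carrier) = ∑ p ∈ l.support,
          ap p.1 p.2 • tp P R (r - p.1) • e p.1 p.2 := by
        rw [hproj1, Finset.sum_congr rfl (fun p hp => Finset.sum_congr rfl (hterm p)),
          Finset.sum_congr rfl hinner]
      -- extend the index set to a sigma Finset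
      set G : Finset P := (l.support.image (fun p => p.1)).filter (fun q => q ≤ r) with hG
      set Gs : Finset (Σ q : P, Fin (n q)) := G.sigma (fun q => Finset.univ) with hGs
      have hzero_ap : ∀ p : Σ q : P, Fin (n q), p ∉ l.support → ap p.1 p.2 = 0 := by
        intro p hp
        have hlp : l p = 0 := Finsupp.notMem_support_iff.mp hp
        rw [hap]
        simp only
        split_ifs with h
        · show (l ⟨p.1, p.2⟩).coeff _ = 0
          have h4 : (⟨p.1, p.2⟩ : Σ q : P, Fin (n q)) = p := rfl
          rw [h4, hlp, AddMonoidAlgebra.coeff_zero, Finsupp.zero_apply]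
        · rfl
      have hzero_nle : ∀ p : Σ q : P, Fin (n q), ¬ p.1 ≤ r → ap p.1 p.2 = 0 := by
        intro p hp
        rw [hap]
        simp only
        rw [dif_neg (fun h => hp (sub_nonneg.mp h))]
      have hsum1 : ∑ p ∈ l.support, ap p.1 p.2 • tp P R (r - p.1) • e p.1 p.2 =
          ∑ p ∈ Gs, ap p.1 p.2 • tp P R (r - p.1) • e p.1 p.2 := by
        have hA : ∑ p ∈ l.support, ap p.1 p.2 • tp P R (r - p.1) • e p.1 p.2 =
            ∑ p ∈ l.support ∪ Gs, ap p.1 p.2 • tp P R (r - p.1) • e p.1 p.2 :=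
          Finset.sum_subset Finset.subset_union_left
            (fun p _ hps' => by rw [hzero_ap p hps', zero_smul])
        have hB : ∑ p ∈ Gs, ap p.1 p.2 • tp P R (r - p.1) • e p.1 p.2 =
            ∑ p ∈ l.support ∪ Gs, ap p.1 p.2 • tp P R (r - p.1) • e p.1 p.2 := by
          refine Finset.sum_subset Finset.subset_union_right ?_
          intro p hpu hpGs
          by_cases hps' : p ∈ l.support
          · have hnG : ¬ p.1 ≤ r := by
              intro hle
              refine hpGs ?_
              rw [hGs]
              refine Finset.mem_sigma.mpr ⟨?_, Finset.mem_univ _⟩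
              rw [hG]
              exact Finset.mem_filter.mpr ⟨Finset.mem_image.mpr ⟨p, hps', rfl⟩, hle⟩
            rw [hzero_nle p hnG, zero_smul]
          · rw [hzero_ap p hps', zero_smul]
        rw [hA, hB]
      have hsig : ∑ p ∈ Gs, ap p.1 p.2 • tp P R (r - p.1) • e p.1 p.2 =
          ∑ q ∈ G, ∑ j : Fin (n q), ap q j • tp P R (r - q) • e q j := by
        rw [hGs]
        exact Finset.sum_sigma _ _ _
      have hpull : ∀ q ∈ G, ∑ j : Fin (n q), ap q j • tp P R (r - q) • e q j =
          tp P R (r - q) • ∑ j : Fin (n q), ap q j • e q j := by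
        intro q _
        rw [Finset.smul_sum]
        exact Finset.sum_congr rfl fun j _ => smul_comm _ _ _
      have hrelG : ∑ q ∈ G, tp P R (r - q) • (∑ j : Fin (n q), ap q j • e q j) = 0 := by
        rw [← Finset.sum_congr rfl hpull, ← hsig, ← hsum1, ← hproj3]
      have hzero := coeff_zero b im pm hbdeg him hpm hpi hdeg hli r G.card G le_rfl
        (fun q hq => (Finset.mem_filter.mp hq).2) ap hrelG
      have hp0 : p0 ∈ l.support := Finsupp.mem_support_iff.mpr
        (fun h => hne0 (by rw [h, AddMonoidAlgebra.coeff_zero, Finsupp.zero_apply]))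
      have hq0G : p0.1 ∈ G := by
        rw [hG]
        exact Finset.mem_filter.mpr ⟨Finset.mem_image.mpr ⟨p0, hp0, rfl⟩,
          le_add_of_nonneg_right s0.2⟩
      have happ := hzero p0.1 hq0G p0.2
      rw [hap] at happ
      simp only at happ
      have hpos : (0 : P) ≤ r - p0.1 := by
        rw [hr, add_sub_cancel_left]
        exact s0.2
      rw [dif_pos hpos] at happ
      have hsub : (⟨r - p0.1, hpos⟩ : ↥(AddSubmonoid.nonneg P)) = s0 := by
        refine Subtype.ext ?_
        show r - p0.1 = s0.1
        rw [hr, add_sub_cancel_left]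
      have hsig2 : (⟨p0.1, p0.2⟩ : Σ q : P, Fin (n q)) = p0 := rfl
      rw [hsig2, hsub] at happ
      exact hne0 happ
    refine Finsupp.ext fun p => ?_
    rw [Finsupp.zero_apply]
    refine AddMonoidAlgebra.ext (Finsupp.ext fun s0 => ?_)
    rw [AddMonoidAlgebra.coeff_zero, Finsupp.zero_apply]
    exact hps p s0
  refine ⟨⟨hliT, hspanT⟩,
    ⟨(Σ r : P, Fin (n r)), (fun p => p.1), Module.Basis.mk hliT (le_of_eq hspanT.symm), fun p => ?_⟩⟩
  rw [Module.Basis.mk_apply]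
  exact hdeg p.1 p.2
end
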